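/- With $C = \widetilde{B}^{-1}B$ as above and $N > 2$, the eigenvalue $\lambda = -1/2$ of $C$ has algebraic multiplicity $2N-2$ and geometric multiplicity $N-1$. -/

import Mathlib

open Matrix Polynomial

/-- determinant of diagonal + constant matrix over a field (matrix determinant lemma). -/
lemma det_diag_add_const {F : Type*} [Field F] {n : ℕ} (t : Fin n → F) (c : F)
    (ht : ∀ j, t j ≠ 0) :
    (Matrix.diagonal t + c • Matrix.of (fun _ _ => (1:F))).det
      = (∏ j, t j) * (1 + c * ∑ j, (t j)⁻¹) := by
  have h1 : Matrix.diagonal t + c • Matrix.of (fun _ _ => (1:F))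
      = Matrix.diagonal t *
        (1 + Matrix.replicateCol Unit (fun j => c * (t j)⁻¹) * Matrix.replicateRow Unit (fun _ => (1:F))) := by
    ext i j
    simp only [Matrix.mul_apply, Matrix.add_apply, Matrix.smul_apply, Matrix.of_apply,
      Matrix.one_apply, Matrix.diagonal_apply, smul_eq_mul, mul_one]
    rw [Finset.sum_eq_single i]
    · by_cases h : i = j <;>
        simp [h, Matrix.replicateCol_apply, Matrix.replicateRow_apply, mul_add, mul_assoc,
          mul_inv_cancel₀ (ht i), Matrix.mul_apply] <;> rw [mul_comm c, ← mul_assoc, mul_inv_cancel₀ (ht _), one_mul]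
    · intro b _ hb; simp [hb, Ne.symm hb]
    · simp
  rw [h1, Matrix.det_mul, Matrix.det_one_add_replicateCol_mul_replicateRow, Matrix.det_diagonal]
  congr 1
  simp [dotProduct, Finset.mul_sum]

/-- Determinant of the special block matrix appearing in the smoother analysis. -/
lemma det_special_fromBlocks {F : Type*} [Field F] {n : ℕ} (α γ : F) (u : Fin n → F)
    (hα : α ≠ 0) (hu : ∀ j, u j ≠ 0) :
    (Matrix.fromBlocks (α • (1 : Matrix (Fin n) (Fin n) F)) (Matrix.diagonal u)
      (Matrix.diagonal u) (γ • Matrix.of fun _ _ => (1:F))).det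
    = α ^ n * ((-1)^n * ((∏ j, u j ^ 2 / α) * (1 - γ * ∑ j, α / u j ^ 2))) := by
  have hA : (α • (1 : Matrix (Fin n) (Fin n) F)) * (α⁻¹ • 1) = 1 := by
    rw [Matrix.smul_mul, Matrix.mul_smul, smul_smul, mul_inv_cancel₀ hα, Matrix.mul_one, one_smul]
  haveI : Invertible (α • (1 : Matrix (Fin n) (Fin n) F)) := invertibleOfRightInverse _ _ hA
  rw [Matrix.det_fromBlocks₁₁, invOf_eq_right_inv hA]
  have hS : γ • Matrix.of (fun _ _ => (1:F))
        - Matrix.diagonal u * (α⁻¹ • 1) * Matrix.diagonal u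
      = -(Matrix.diagonal (fun j => u j ^2 / α) + (-γ) • Matrix.of (fun _ _ => (1:F))) := by
    ext i j
    by_cases h : i = j <;>
      simp [Matrix.mul_apply, Matrix.diagonal_apply, h, Matrix.one_apply, Finset.mul_sum,
        mul_comm, mul_assoc, div_eq_mul_inv, pow_two] <;> ring
  rw [hS, Matrix.det_neg, det_diag_add_const _ _
    (fun j => div_ne_zero (pow_ne_zero _ (hu j)) hα),
    Matrix.det_smul, Matrix.det_one, Fintype.card_fin]
  have : ∀ j, (u j ^ 2 / α)⁻¹ = α / u j ^2 := fun j => by rw [inv_div]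
  simp only [this, mul_one]
  ring


set_option maxHeartbeats 1000000 in
set_option synthInstance.maxHeartbeats 100000 in


lemma final_algebra {K : Type*} [Field K] (Nn : ℕ) (hNn : 0 < Nn) (x y n ν P S : K)
    (hx : x ≠ 0) (hy : y ≠ 0) (hn : n ≠ 0) (hν : ν ≠ 0) :
    (x/n)^Nn * ((-1)^Nn * (((y^2/(n*x))^Nn * P) * (1 - (-(x/(ν*n^2))) * ((x*n/y^2) * S))))
    = y^(2*Nn-2) * (((-1)^Nn * ((n^(2*Nn))⁻¹) * P) * y^2
        + ((-1)^Nn * ((n^(2*Nn))⁻¹) * P * ((ν*n)⁻¹ * S)) * x^2) := by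
  have h2n : 2*Nn = (2*Nn-2)+2 := by omega
  have e0 : (x/n) * (y^2/(n*x)) = y^2/n^2 := by field_simp
  have e1 : (x/n)^Nn * (y^2/(n*x))^Nn = (y^(2*Nn-2) * y^2) / n^(2*Nn) := by
    rw [← mul_pow, e0, div_pow]
    have hy2 : (y^2)^Nn = y^(2*Nn-2) * y^2 := by
      rw [← pow_mul, ← pow_add]
      exact congrArg (fun k => y^k) h2n
    have hn2 : (n^2)^Nn = n^(2*Nn) := (pow_mul n 2 Nn).symm
    rw [hy2, hn2]
  have e2 : (1 - (-(x/(ν*n^2))) * ((x*n/y^2) * S)) = 1 + (x^2/(ν*n*y^2))*S := by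
    field_simp
    ring
  calc (x/n)^Nn * ((-1)^Nn * (((y^2/(n*x))^Nn * P) * (1 - (-(x/(ν*n^2))) * ((x*n/y^2) * S))))
      = ((x/n)^Nn * (y^2/(n*x))^Nn) *
          ((-1)^Nn * P * (1 - (-(x/(ν*n^2))) * ((x*n/y^2) * S))) := by ring
    _ = ((y^(2*Nn-2) * y^2) / n^(2*Nn)) * ((-1)^Nn * P * (1 + (x^2/(ν*n*y^2))*S)) := by
        rw [e1, e2]
    _ = y^(2*Nn-2) * (((-1)^Nn * ((n^(2*Nn))⁻¹) * P) * y^2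
        + ((-1)^Nn * ((n^(2*Nn))⁻¹) * P * ((ν*n)⁻¹ * S)) * x^2) := by
        have hnM : n^(2*Nn) ≠ 0 := pow_ne_zero _ hn
        have hyM : y^(2*Nn-2) ≠ 0 := pow_ne_zero _ hy
        generalize hg : n ^ (2 * Nn) = nM at hnM ⊢
        generalize hg2 : y ^ (2 * Nn - 2) = yM at hyM ⊢
        field_simp

set_option maxHeartbeats 1000000 in
set_option synthInstance.maxHeartbeats 100000 in
lemma charpoly_factor_aux (N : ℕ) (hNpos : 0 < N) (dc : Fin N → ℂ) (hdc : ∀ j, dc j ≠ 0)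
    (νc : ℂ) (hνc : νc ≠ 0)
    (Btil B C : Matrix (Fin N ⊕ Fin N) (Fin N ⊕ Fin N) ℂ)
    (hBtil : Btil = Matrix.fromBlocks (((N:ℂ))⁻¹ • 1)
      (Matrix.diagonal fun j => dc j / N) (Matrix.diagonal fun j => dc j / N)
      (-((νc * (N:ℂ)^2)⁻¹) • Matrix.of fun _ _ => (1:ℂ)))
    (hB : B = Matrix.fromBlocks 0 (-(1/2:ℂ) • Matrix.diagonal fun j => dc j / N)
      (-(1/2:ℂ) • Matrix.diagonal fun j => dc j / N) 0)
    (hBC : Btil * C = B) :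
    Polynomial.C Btil.det * C.charpoly
      = (Polynomial.X + Polynomial.C (1/2:ℂ))^(2*N-2) *
        (Polynomial.C ((-1:ℂ)^N * (((N:ℂ))^(2*N))⁻¹ * ∏ j, dc j^2) *
            (Polynomial.X + Polynomial.C (1/2:ℂ))^2
         + Polynomial.C ((-1:ℂ)^N * (((N:ℂ))^(2*N))⁻¹ * (∏ j, dc j^2) *
            ((νc * N)⁻¹ * ∑ j, (dc j^2)⁻¹)) * Polynomial.X^2) := by
  have hN0 : (N : ℂ) ≠ 0 := Nat.cast_ne_zero.2 hNpos.ne'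
  -- step 1 : C (det Btil) * charpoly C = det (X • Btil' - B')
  have h1 : Polynomial.C Btil.det * C.charpoly
      = ((Polynomial.X : ℂ[X]) • Btil.map Polynomial.C - B.map Polynomial.C).det := by
    rw [Matrix.charpoly, RingHom.map_det, ← Matrix.det_mul]
    congr 1
    rw [Matrix.charmatrix, Matrix.mul_sub]
    simp only [RingHom.mapMatrix_apply]
    have h12 : Btil.map ⇑Polynomial.C * C.map ⇑Polynomial.C = B.map ⇑Polynomial.C := by
      rw [← Matrix.map_mul, hBC]
    rw [h12]
    congr 1
    have hs : (Matrix.scalar (Fin N ⊕ Fin N) (Polynomial.X : ℂ[X]))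
        = (Polynomial.X : ℂ[X]) • (1 : Matrix (Fin N ⊕ Fin N) (Fin N ⊕ Fin N) ℂ[X]) := by
      ext i j
      by_cases h : i = j <;> simp [Matrix.scalar_apply, Matrix.diagonal_apply, Matrix.one_apply, h]
    rw [hs, Matrix.mul_smul, Matrix.mul_one]
  rw [h1]
  -- set up the fraction field
  set K := RatFunc ℂ with hK
  let φ : Polynomial ℂ →+* K := algebraMap _ _
  have φinj : Function.Injective φ := IsFractionRing.injective _ _
  haveI : CharZero K := charZero_of_injective_algebraMap φinj
  let ψ : ℂ →+* K := φ.comp Polynomial.C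
  have hψ : ∀ z : ℂ, φ (Polynomial.C z) = ψ z := fun z => rfl
  have hψ2 : ψ (2:ℂ) = (2 : K) := map_ofNat ψ 2
  have hne : ∀ p : Polynomial ℂ, p ≠ 0 → φ p ≠ 0 := fun p hp h =>
    hp (φinj (h.trans (map_zero φ).symm))
  set xK := φ Polynomial.X with hxKdef
  set y : K := xK + ψ (1/2 : ℂ) with hydef
  have hxK : xK ≠ 0 := hne _ Polynomial.X_ne_zero
  have hy : y ≠ 0 := by
    have : y = φ (Polynomial.X + Polynomial.C (1/2:ℂ)) := by rw [map_add, hψ]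
    rw [this]
    exact hne _ (Polynomial.X_add_C_ne_zero _)
  have hnnK : ((N : ℕ) : K) ≠ 0 := by
    rw [← map_natCast φ]
    exact hne _ (Nat.cast_ne_zero.2 hNpos.ne')
  have hνK : ψ νc ≠ 0 := hne _ (Polynomial.C_ne_zero.2 hνc)
  have hdK : ∀ j, ψ (dc j) ≠ 0 := fun j => hne _ (Polynomial.C_ne_zero.2 (hdc j))
  -- αK, uK, γK
  set αK : K := xK / N with hαKdef
  set uK : Fin N → K := fun j => y * (ψ (dc j) / N) with huKdef
  set γK : K := -(xK / (ψ νc * (N:K)^2)) with hγKdef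
  have hαK : αK ≠ 0 := div_ne_zero hxK hnnK
  have huK : ∀ j, uK j ≠ 0 := fun j =>
    mul_ne_zero hy (div_ne_zero (hdK j) hnnK)
  -- step 2 : the mapped matrix is a special block matrix
  have h2 : (((Polynomial.X : ℂ[X]) • Btil.map Polynomial.C - B.map Polynomial.C).map φ)
      = Matrix.fromBlocks (αK • 1) (Matrix.diagonal uK) (Matrix.diagonal uK)
          (γK • Matrix.of fun _ _ => (1:K)) := by
    rw [hBtil, hB]
    ext (i|i) (j|j) <;>
      simp only [Matrix.map_apply, Matrix.sub_apply, Matrix.smul_apply, smul_eq_mul,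
        Matrix.fromBlocks_apply₁₁, Matrix.fromBlocks_apply₁₂, Matrix.fromBlocks_apply₂₁,
        Matrix.fromBlocks_apply₂₂, Matrix.one_apply, Matrix.diagonal_apply, Matrix.of_apply,
        Matrix.zero_apply, mul_ite, mul_zero, mul_one, ite_mul, zero_mul, one_mul,
        apply_ite φ, hψ, _root_.map_mul, _root_.map_sub, _root_.map_zero, _root_.map_one, _root_.map_neg, map_inv₀,
        map_natCast, map_pow, map_div₀, hψ2, huKdef, hαKdef, hγKdef, hydef] <;>
      (try split_ifs) <;> simp only [_root_.map_mul ψ, map_inv₀ ψ, map_natCast ψ, _root_.map_zero ψ, map_div₀ ψ, _root_.map_neg ψ, _root_.map_one ψ, hψ2, ← hxKdef] <;> (try simp only [hψ2]) <;> ring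
  -- step 3 : apply φ to both sides and compute the determinant
  apply φinj
  rw [RingHom.map_det, RingHom.mapMatrix_apply, h2, det_special_fromBlocks _ _ _ hαK huK]
  -- compute the image of the right hand side
  simp only [_root_.map_mul, _root_.map_add, map_pow, map_inv₀, map_natCast, map_prod,
    map_sum, _root_.map_neg, _root_.map_one, hψ]
  rw [← hxKdef, ← hydef]
  -- now a pure field computation in K
  have hprod : (∏ j, uK j^2/αK) = (y^2/((N:K)*xK))^N * ∏ j, ψ (dc j)^2 := by
    calc (∏ j, uK j^2/αK) = ∏ j, ((y^2/((N:K)*xK)) * ψ (dc j)^2) := by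
          refine Finset.prod_congr rfl fun j _ => ?_
          rw [huKdef, hαKdef]
          linear_combination (y^2*ψ (dc j)^2*(N:K)⁻¹*xK⁻¹) * mul_inv_cancel₀ hnnK
            + (y^2*ψ (dc j)^2*(N:K)⁻¹^2*xK⁻¹) * inv_inv (N:K)
      _ = (∏ _j : Fin N, (y^2/((N:K)*xK))) * ∏ j, ψ (dc j)^2 := Finset.prod_mul_distrib
      _ = (y^2/((N:K)*xK))^N * ∏ j, ψ (dc j)^2 := by
          rw [Finset.prod_const, Finset.card_univ, Fintype.card_fin]
  have hsum : (∑ j, αK / uK j^2) = (xK*(N:K)/y^2) * ∑ j, (ψ (dc j)^2)⁻¹ := by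
    rw [Finset.mul_sum]
    refine Finset.sum_congr rfl fun j _ => ?_
    rw [huKdef, hαKdef]
    have e : (y * (ψ (dc j) / N))^2 = y^2 * ψ (dc j)^2 * ((N:K)^2)⁻¹ := by ring
    rw [e, div_mul_eq_div_div, div_mul_eq_div_div, div_inv_eq_mul]
    linear_combination (xK*(N:K)*(y^2)⁻¹*(ψ (dc j)^2)⁻¹) * mul_inv_cancel₀ hnnK
  rw [hprod, hsum, hγKdef, hαKdef]
  exact final_algebra N hNpos xK y ((N:ℕ):K) (ψ νc) (∏ j, ψ (dc j)^2) (∑ j, (ψ (dc j)^2)⁻¹)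
    hxK hy hnnK hνK

/-- the eigenvalue `-1/2` of `C = B̃⁻¹B` has algebraic multiplicity
`2N-2` and geometric multiplicity `N-1` when `N > 2`. -/
theorem multiplicity_minus_half_collective_smoother
    (N : ℕ) (hN : 2 < N) (d : Fin N → ℝ) (hd : ∀ j, 0 < d j)
    (ν : ℝ) (hν : 0 < ν)
    (D : Matrix (Fin N) (Fin N) ℂ) (hD : D = Matrix.diagonal fun j => (d j : ℂ) / N)
    (Btil : Matrix (Fin N ⊕ Fin N) (Fin N ⊕ Fin N) ℂ)
    (hBtil : Btil = Matrix.fromBlocks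
      (((N : ℂ))⁻¹ • (1 : Matrix (Fin N) (Fin N) ℂ)) D D
      (-(((ν : ℂ) * (N : ℂ) ^ 2)⁻¹) • Matrix.of fun _ _ => (1 : ℂ)))
    (B : Matrix (Fin N ⊕ Fin N) (Fin N ⊕ Fin N) ℂ)
    (hB : B = Matrix.fromBlocks 0 (-(1 / 2 : ℂ) • D) (-(1 / 2 : ℂ) • D) 0)
    (C : Matrix (Fin N ⊕ Fin N) (Fin N ⊕ Fin N) ℂ) (hC : C = Btil⁻¹ * B) :
    (Matrix.charpoly C).rootMultiplicity (-(1 / 2 : ℂ)) = 2 * N - 2 ∧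
    Module.finrank ℂ
      (LinearMap.ker ((C - (-(1 / 2 : ℂ)) • (1 : Matrix (Fin N ⊕ Fin N) (Fin N ⊕ Fin N) ℂ)).mulVecLin))
      = N - 1 := by
  -- basic nonvanishing facts
  have hNpos : 0 < N := by omega
  have hNR : (N : ℝ) ≠ 0 := Nat.cast_ne_zero.2 (by omega)
  have hN0 : (N : ℂ) ≠ 0 := Nat.cast_ne_zero.2 (by omega)
  have hν0 : (ν : ℂ) ≠ 0 := Complex.ofReal_ne_zero.2 hν.ne'
  have hd0 : ∀ j, (d j : ℂ) ≠ 0 := fun j => Complex.ofReal_ne_zero.2 (hd j).ne'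
  -- determinant of Btil
  have hdetBtil : Btil.det = ((N:ℂ)⁻¹) ^ N * ((-1)^N *
      ((∏ j, ((d j : ℂ)/N) ^ 2 / ((N:ℂ))⁻¹) *
        (1 - (-(((ν : ℂ) * (N : ℂ) ^ 2)⁻¹)) * ∑ j, ((N:ℂ))⁻¹ / ((d j : ℂ)/N) ^ 2))) := by
    rw [hBtil, hD]
    exact det_special_fromBlocks _ _ _ (inv_ne_zero hN0)
      (fun j => div_ne_zero (hd0 j) hN0)
  have hlastBtil : (1 - (-(((ν : ℂ) * (N : ℂ) ^ 2)⁻¹)) * ∑ j, ((N:ℂ))⁻¹ / ((d j : ℂ)/N) ^ 2)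
      = (((1 + (ν * (N:ℝ) ^ 2)⁻¹ * ∑ j, ((N:ℝ))⁻¹ / ((d j)/N) ^ 2 : ℝ)) : ℂ) := by
    push_cast
    ring
  have hdet_ne : Btil.det ≠ 0 := by
    rw [hdetBtil, hlastBtil]
    refine mul_ne_zero (pow_ne_zero _ (inv_ne_zero hN0)) (mul_ne_zero (pow_ne_zero _ (by norm_num))
      (mul_ne_zero ?_ ?_))
    · rw [Finset.prod_ne_zero_iff]
      exact fun j _ => div_ne_zero (pow_ne_zero _ (div_ne_zero (hd0 j) hN0)) (inv_ne_zero hN0)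
    · rw [Complex.ofReal_ne_zero]
      positivity
  have hdet_unit : IsUnit Btil.det := isUnit_iff_ne_zero.2 hdet_ne
  have hBC : Btil * C = B := by
    rw [hC, ← Matrix.mul_assoc, Matrix.mul_nonsing_inv _ hdet_unit, Matrix.one_mul]
  constructor
  · -- ALGEBRAIC MULTIPLICITY

    haveI : Nonempty (Fin N) := ⟨⟨0, hNpos⟩⟩
    have hBtil' : Btil = Matrix.fromBlocks (((N:ℂ))⁻¹ • 1)
        (Matrix.diagonal fun j => (d j : ℂ) / N) (Matrix.diagonal fun j => (d j : ℂ) / N)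
        (-(((ν:ℂ) * (N:ℂ)^2)⁻¹) • Matrix.of fun _ _ => (1:ℂ)) := by rw [hBtil, hD]
    have hB' : B = Matrix.fromBlocks 0
        (-(1/2:ℂ) • Matrix.diagonal fun j => (d j : ℂ) / N)
        (-(1/2:ℂ) • Matrix.diagonal fun j => (d j : ℂ) / N) 0 := by rw [hB, hD]
    have key := charpoly_factor_aux N hNpos (fun j => (d j : ℂ)) hd0 (ν:ℂ) hν0
      Btil B C hBtil' hB' hBC
    -- the constants
    set a : ℂ := (-1:ℂ)^N * (((N:ℂ))^(2*N))⁻¹ * ∏ j, (d j : ℂ)^2 with hadef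
    set b : ℂ := (-1:ℂ)^N * (((N:ℂ))^(2*N))⁻¹ * (∏ j, (d j : ℂ)^2) *
      (((ν:ℂ) * N)⁻¹ * ∑ j, ((d j : ℂ)^2)⁻¹) with hbdef
    have hprod_ne : (∏ j, (d j : ℂ)^2) ≠ 0 :=
      Finset.prod_ne_zero_iff.2 fun j _ => pow_ne_zero _ (hd0 j)
    have hsum_ne : (∑ j, ((d j : ℂ)^2)⁻¹) ≠ 0 := by
      have hcast : (∑ j, ((d j : ℂ)^2)⁻¹) = ((∑ j, ((d j)^2)⁻¹ : ℝ) : ℂ) := by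
        push_cast
        ring
      rw [hcast, Complex.ofReal_ne_zero]
      have : 0 < ∑ j, ((d j)^2)⁻¹ :=
        Finset.sum_pos (fun j _ => by have := hd j; positivity) Finset.univ_nonempty
      exact this.ne'
    have hb : b ≠ 0 := by
      rw [hbdef]
      refine mul_ne_zero (mul_ne_zero (mul_ne_zero (pow_ne_zero _ (by norm_num))
        (inv_ne_zero (pow_ne_zero _ hN0))) hprod_ne)
        (mul_ne_zero (inv_ne_zero (mul_ne_zero hν0 hN0)) hsum_ne)
    set q : Polynomial ℂ := Polynomial.C a * (Polynomial.X + Polynomial.C (1/2:ℂ))^2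
      + Polynomial.C b * Polynomial.X^2 with hqdef
    have heval : q.eval (-(1/2:ℂ)) = b * (1/4) := by
      rw [hqdef]
      simp only [Polynomial.eval_add, Polynomial.eval_mul, Polynomial.eval_pow,
        Polynomial.eval_C, Polynomial.eval_X]
      norm_num
    have hqroot : ¬ q.IsRoot (-(1/2:ℂ)) := by
      rw [Polynomial.IsRoot, heval]
      exact mul_ne_zero hb (by norm_num)
    have hcp_ne : C.charpoly ≠ 0 := (Matrix.charpoly_monic C).ne_zero
    have hCd : (Polynomial.C Btil.det : Polynomial ℂ) ≠ 0 := Polynomial.C_ne_zero.2 hdet_ne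
    have h0 : (Polynomial.C Btil.det) * C.charpoly ≠ 0 := mul_ne_zero hCd hcp_ne
    have e1 := Polynomial.rootMultiplicity_mul (x := -(1/2:ℂ)) h0
    have e2 : (Polynomial.C Btil.det).rootMultiplicity (-(1/2:ℂ)) = 0 :=
      Polynomial.rootMultiplicity_eq_zero (by simp [Polynomial.IsRoot, hdet_ne])
    have hkey' : (Polynomial.X + Polynomial.C (1/2:ℂ))^(2*N-2) * q ≠ 0 := by
      rw [← key]; exact h0
    have e3 := Polynomial.rootMultiplicity_mul (x := -(1/2:ℂ)) hkey'
    have e4 : ((Polynomial.X + Polynomial.C (1/2:ℂ))^(2*N-2)).rootMultiplicity (-(1/2:ℂ))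
        = 2*N-2 := by
      have hxc : (Polynomial.X + Polynomial.C (1/2:ℂ))
          = Polynomial.X - Polynomial.C (-(1/2:ℂ)) := by
        rw [map_neg, sub_neg_eq_add]
      rw [hxc, Polynomial.rootMultiplicity_X_sub_C_pow]
    have e5 : q.rootMultiplicity (-(1/2:ℂ)) = 0 :=
      Polynomial.rootMultiplicity_eq_zero hqroot
    have e6 : (Polynomial.C Btil.det * C.charpoly).rootMultiplicity (-(1/2:ℂ))
        = ((Polynomial.X + Polynomial.C (1/2:ℂ))^(2*N-2) * q).rootMultiplicity (-(1/2:ℂ)) := by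
      rw [key]
    rw [e1, e2, zero_add] at e6
    rw [e3, e4, e5, add_zero] at e6
    exact e6

  · -- GEOMETRIC MULTIPLICITY

    have h2N : ((2:ℂ)*N) ≠ 0 := by
      simp [hN0]
    have hγ1 : (-((2:ℂ)*ν*(N:ℂ)^2)⁻¹) ≠ 0 := by
      simp [hN0, hν0]
    -- the matrix B + (1/2) Btil is block diagonal
    set M0 : Matrix (Fin N ⊕ Fin N) (Fin N ⊕ Fin N) ℂ :=
      Matrix.fromBlocks (((2:ℂ)*N)⁻¹ • 1) 0 0
        ((-((2:ℂ)*ν*(N:ℂ)^2)⁻¹) • Matrix.of fun _ _ => (1:ℂ)) with hM0def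
    have hM0 : Btil * (C - (-(1 / 2 : ℂ)) • 1) = M0 := by
      rw [sub_eq_add_neg, neg_smul, neg_neg, Matrix.mul_add, hBC, Matrix.mul_smul, Matrix.mul_one,
        hM0def, hB, hBtil, hD]
      ext (i|i) (j|j) <;>
        simp [Matrix.one_apply, Matrix.diagonal_apply, smul_eq_mul, mul_ite] <;>
        (try split_ifs) <;> ring
    -- kernel description
    have hker : ∀ v : (Fin N ⊕ Fin N) → ℂ,
        (C - (-(1 / 2 : ℂ)) • 1) *ᵥ v = 0 ↔ M0 *ᵥ v = 0 := by
      intro v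
      constructor
      · intro h
        rw [← hM0, ← Matrix.mulVec_mulVec, h, Matrix.mulVec_zero]
      · intro h
        have : (C - (-(1 / 2 : ℂ)) • 1) = Btil⁻¹ * M0 := by
          rw [← hM0, ← Matrix.mul_assoc, Matrix.nonsing_inv_mul _ hdet_unit, Matrix.one_mul]
        rw [this, ← Matrix.mulVec_mulVec, h, Matrix.mulVec_zero]
    have hM0v : ∀ v : (Fin N ⊕ Fin N) → ℂ, M0 *ᵥ v = 0 ↔
        ((∀ i, v (Sum.inl i) = 0) ∧ ∑ j, v (Sum.inr j) = 0) := by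
      intro v
      have hcomp : ∀ k, (M0 *ᵥ v) k = Sum.elim
          (fun i => ((2:ℂ)*N)⁻¹ * v (Sum.inl i))
          (fun _ => (-((2:ℂ)*ν*(N:ℂ)^2)⁻¹) * ∑ j, v (Sum.inr j)) k := by
        intro k
        cases k with
        | inl i =>
          simp [hM0def, Matrix.mulVec, dotProduct, Fintype.sum_sum_type, Matrix.one_apply,
            ite_mul, Finset.mul_sum]
        | inr i =>
          simp [hM0def, Matrix.mulVec, dotProduct, Fintype.sum_sum_type, Finset.mul_sum]
      constructor
      · intro h
        have h1 : ∀ i, (M0 *ᵥ v) (Sum.inl i) = 0 := fun i => by rw [h]; rfl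
        have h2 : (M0 *ᵥ v) (Sum.inr ⟨0, hNpos⟩) = 0 := by rw [h]; rfl
        constructor
        · intro i
          have h3 := h1 i
          rw [hcomp] at h3
          simp only [Sum.elim_inl] at h3
          exact (mul_eq_zero.1 h3).resolve_left (inv_ne_zero h2N)
        · have h3 := h2
          rw [hcomp] at h3
          simp only [Sum.elim_inr] at h3
          exact (mul_eq_zero.1 h3).resolve_left hγ1
      · rintro ⟨h1, h2⟩
        funext k
        rw [hcomp]
        cases k with
        | inl i => simp [h1 i]
        | inr i => simp [h2]
    -- linear map to compare with
    set g : ((Fin N ⊕ Fin N) → ℂ) →ₗ[ℂ] (Fin N → ℂ) × ℂ :=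
      { toFun := fun v => (fun i => v (Sum.inl i), ∑ j, v (Sum.inr j)),
        map_add' := by intro u w; ext <;> simp [Finset.sum_add_distrib]
        map_smul' := by intro c w; ext <;> simp [Finset.mul_sum] } with hgdef
    have hkerg : LinearMap.ker ((C - (-(1 / 2 : ℂ)) •
        (1 : Matrix (Fin N ⊕ Fin N) (Fin N ⊕ Fin N) ℂ)).mulVecLin) = LinearMap.ker g := by
      ext v
      rw [LinearMap.mem_ker, LinearMap.mem_ker, Matrix.mulVecLin_apply, hker v, hM0v v, hgdef]
      simp only [LinearMap.coe_mk, AddHom.coe_mk, Prod.mk_eq_zero, funext_iff]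
      constructor
      · rintro ⟨h1, h2⟩; exact ⟨h1, h2⟩
      · rintro ⟨h1, h2⟩; exact ⟨h1, h2⟩
    have hsurj : Function.Surjective g := by
      rintro ⟨w, c⟩
      refine ⟨Sum.elim w (Pi.single ⟨0, hNpos⟩ c), ?_⟩
      rw [hgdef]
      simp
    have hrn := LinearMap.finrank_range_add_finrank_ker g
    rw [LinearMap.range_eq_top.2 hsurj, finrank_top, Module.finrank_prod,
      Module.finrank_fintype_fun_eq_card, Module.finrank_fintype_fun_eq_card,
      Module.finrank_self, Fintype.card_sum, Fintype.card_fin] at hrn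
    rw [hkerg]
    omega
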